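/- Let S ⊆ ℝ≥0 be finite and u ∈ ℝ≥0. The S-orbit of u (the set {π(u) : π an S-timed automorphism}) is either the singleton {u}, which happens exactly when the fractional part of u belongs to the set of fractional parts of elements of S, or an open interval whose endpoints are of the form t + z with t ∈ S and z ∈ ℤ (or ±∞ appropriately when S is empty of relevant points). -/

import Mathlib

/-- A timed automorphism: a monotone bijection `π : ℝ → ℝ` with `π (x+1) = π x + 1`. -/
def IsTimedAutomorphism (π : ℝ → ℝ) : Prop :=
  Function.Bijective π ∧ StrictMono π ∧ ∀ x : ℝ, π (x + 1) = π x + 1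

/-- An `S`-timed automorphism: a timed automorphism fixing every point of `S`. -/
def IsSTimedAutomorphism (S : Set ℝ) (π : ℝ → ℝ) : Prop :=
  IsTimedAutomorphism π ∧ ∀ t ∈ S, π t = t

/-- A timed word: a finite sequence of letters with nonnegative, nondecreasing timestamps. -/
def IsTimedWord {A : Type*} (w : List (A × ℝ)) : Prop :=
  (∀ p ∈ w, 0 ≤ p.2) ∧ (w.map Prod.snd).Chain' (· ≤ ·)

/-- Pointwise action of a real function on the timestamps of a timed word. -/
def mapTW {A : Type*} (π : ℝ → ℝ) (w : List (A × ℝ)) : List (A × ℝ) :=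
  w.map fun p => (p.1, π p.2)

lemma timed_int {π : ℝ → ℝ} (h : ∀ x : ℝ, π (x + 1) = π x + 1) :
    ∀ (x : ℝ) (z : ℤ), π (x + z) = π x + z := by
  have h' : ∀ x : ℝ, π (x - 1) = π x - 1 := by
    intro x
    have := h (x - 1)
    simp at this
    linarith
  intro x z
  induction z using Int.induction_on with
  | zero => simp
  | succ n ih =>
      have := h (x + n)
      push_cast
      push_cast at ih this
      rw [show x + ((n : ℝ) + 1) = x + n + 1 by ring, this, ih]; ring
  | pred n ih =>
      have := h' (x + (-(n : ℝ)))
      push_cast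
      push_cast at ih this
      rw [show x + (-(n : ℝ) - 1) = x + -(n : ℝ) - 1 by ring, this, ih]; ring

lemma tent_low (α β q f g : ℝ) (hα : 0 ≤ α) (hβ : 0 ≤ β) (hfg : f ≤ g) :
    max 0 (min (α * f) (β * (q - f))) - β * (g - f) ≤ max 0 (min (α * g) (β * (q - g))) := by
  have hd : 0 ≤ β * (g - f) := mul_nonneg hβ (by linarith)
  have h1 : min (α * f) (β * (q - f)) - β * (g - f) ≤ min (α * g) (β * (q - g)) := by
    rcases le_total (α * g) (β * (q - g)) with h | h
    · rw [min_eq_left h]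
      have := min_le_left (α * f) (β * (q - f))
      nlinarith
    · rw [min_eq_right h]
      have := min_le_right (α * f) (β * (q - f))
      nlinarith
  rcases le_total (0 : ℝ) (min (α * f) (β * (q - f))) with h0 | h0
  · rw [max_eq_right h0]
    exact le_trans (by linarith) (le_max_right _ _)
  · rw [max_eq_left (by linarith : min (α * f) (β * (q - f)) ≤ 0)]
    exact le_trans (by linarith) (le_max_left _ _)

lemma tent_up (α β q f g : ℝ) (hα : 0 ≤ α) (hβ : 0 ≤ β) (hfg : f ≤ g) :
    max 0 (min (α * g) (β * (q - g))) ≤ max 0 (min (α * f) (β * (q - f))) + α * (g - f) := by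
  have hd : 0 ≤ α * (g - f) := mul_nonneg hα (by linarith)
  have h1 : min (α * g) (β * (q - g)) ≤ min (α * f) (β * (q - f)) + α * (g - f) := by
    rcases le_total (α * f) (β * (q - f)) with h | h
    · rw [min_eq_left h]
      have := min_le_left (α * g) (β * (q - g))
      nlinarith
    · rw [min_eq_right h]
      have := min_le_right (α * g) (β * (q - g))
      nlinarith
  rcases le_total (0 : ℝ) (min (α * g) (β * (q - g))) with h0 | h0
  · rw [max_eq_right h0]
    have := le_max_right (0:ℝ) (min (α * f) (β * (q - f))); linarith
  · rw [max_eq_left (by linarith : min (α * g) (β * (q - g)) ≤ 0)]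
    have := le_max_left (0:ℝ) (min (α * f) (β * (q - f))); linarith

lemma construct (a u b v : ℝ) (hau : a < u) (hub : u < b) (hba : b ≤ a + 1)
    (hav : a < v) (hvb : v < b) :
    ∃ π : ℝ → ℝ, IsTimedAutomorphism π ∧ π u = v ∧
      ∀ x : ℝ, (∀ z : ℤ, x + (z : ℝ) ∉ Set.Ioo a b) → π x = x := by
  have hp : (0:ℝ) < u - a := by linarith
  have hqp : (0:ℝ) < b - u := by linarith
  set α : ℝ := (u - a)⁻¹ with hαdef
  set β : ℝ := (b - u)⁻¹ with hβdef
  set q : ℝ := b - a with hqdef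
  set c : ℝ := v - u with hcdef
  have hα : 0 < α := inv_pos.mpr hp
  have hβ : 0 < β := inv_pos.mpr hqp
  have hq0 : 0 < q := by simp only [hqdef]; linarith
  have hq1 : q ≤ 1 := by simp only [hqdef]; linarith
  set t : ℝ → ℝ := fun f => max 0 (min (α * f) (β * (q - f))) with htdef
  set π : ℝ → ℝ := fun x => x + c * t (Int.fract (x - a)) with hπdef
  have t_nonneg : ∀ f, 0 ≤ t f := fun f => le_max_left _ _
  have t_le : ∀ f, f ≤ 1 → t f ≤ α := by
    intro f hf
    apply max_le hα.le
    calc min (α * f) (β * (q - f)) ≤ α * f := min_le_left _ _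
      _ ≤ α * 1 := by nlinarith
      _ = α := mul_one α
  have t0 : t 0 = 0 := by
    have h1 : min (α * 0) (β * (q - 0)) = 0 := by
      rw [mul_zero, sub_zero]
      exact min_eq_left (by positivity)
    simp only [htdef, h1, max_self]
  have t1 : t 1 = 0 := by
    have h2 : β * (q - 1) ≤ 0 := mul_nonpos_of_nonneg_of_nonpos hβ.le (by linarith)
    apply max_eq_left
    calc min (α * 1) (β * (q - 1)) ≤ β * (q - 1) := min_le_right _ _
      _ ≤ 0 := h2
  have tu : t (u - a) = 1 := by
    have e1 : α * (u - a) = 1 := inv_mul_cancel₀ hp.ne'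
    have e2 : β * (q - (u - a)) = 1 := by
      rw [show q - (u - a) = b - u by simp [hqdef]]
      exact inv_mul_cancel₀ hqp.ne'
    simp only [htdef, e1, e2, min_self]
    exact max_eq_right zero_le_one
  -- difference bounds
  have key : ∀ x y : ℝ, x < y →
      -(β * (y - x)) ≤ t (Int.fract (y - a)) - t (Int.fract (x - a)) ∧
      t (Int.fract (y - a)) - t (Int.fract (x - a)) ≤ α * (y - x) := by
    intro x y hxy
    set n : ℤ := ⌊x - a⌋ with hn
    set m : ℤ := ⌊y - a⌋ with hm
    have hfx : Int.fract (x - a) = x - a - n := rfl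
    have hfy : Int.fract (y - a) = y - a - m := rfl
    have hnm : n ≤ m := Int.floor_le_floor (by linarith)
    rcases eq_or_lt_of_le hnm with heq | hlt
    · -- same cell
      have hfg : Int.fract (x - a) ≤ Int.fract (y - a) := by
        rw [hfx, hfy, ← heq]; linarith
      have hdiff : Int.fract (y - a) - Int.fract (x - a) = y - x := by
        rw [hfx, hfy, ← heq]; ring
      constructor
      · have := tent_low α β q (Int.fract (x - a)) (Int.fract (y - a)) hα.le hβ.le hfg
        simp only [htdef]
        rw [hdiff] at this
        linarith
      · have := tent_up α β q (Int.fract (x - a)) (Int.fract (y - a)) hα.le hβ.le hfg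
        simp only [htdef]
        rw [hdiff] at this
        linarith
    · -- different cells
      have h1 : (n : ℝ) + 1 ≤ (m : ℝ) := by exact_mod_cast hlt
      have hym : (m : ℝ) ≤ y - a := Int.floor_le (y - a)
      have hxn : x - a < (n : ℝ) + 1 := Int.lt_floor_add_one (x - a)
      constructor
      · -- t fy ≥ 0, t fx ≤ β * (y - x)
        have hlow := tent_low α β q (Int.fract (x - a)) 1 hα.le hβ.le (Int.fract_lt_one _).le
        have ht1 : max 0 (min (α * 1) (β * (q - 1))) = 0 := t1
        rw [ht1] at hlow
        have h2 : 1 - Int.fract (x - a) ≤ y - x := by rw [hfx]; linarith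
        have h3 : t (Int.fract (x - a)) ≤ β * (y - x) := by
          have := mul_le_mul_of_nonneg_left h2 hβ.le
          simp only [htdef]; linarith
        have h4 := t_nonneg (Int.fract (y - a))
        linarith
      · have hup := tent_up α β q 0 (Int.fract (y - a)) hα.le hβ.le (Int.fract_nonneg _)
        have ht0 : max 0 (min (α * 0) (β * (q - 0))) = 0 := t0
        rw [ht0] at hup
        have h2 : Int.fract (y - a) ≤ y - x := by rw [hfy]; linarith
        have h3 : t (Int.fract (y - a)) ≤ α * (y - x) := by
          have := mul_le_mul_of_nonneg_left h2 hα.le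
          simp only [htdef]; nlinarith
        have h4 := t_nonneg (Int.fract (x - a))
        linarith
  -- strict mono
  have hmono : StrictMono π := by
    intro x y hxy
    obtain ⟨k1, k2⟩ := key x y hxy
    simp only [hπdef]
    rcases le_total 0 c with hc | hc
    · have hcβ : c * β < 1 := by
        have h5 : c * β < (b - u) * β := by
          apply mul_lt_mul_of_pos_right _ hβ
          simp only [hcdef]; linarith
        rwa [mul_inv_cancel₀ hqp.ne'] at h5
      nlinarith [mul_le_mul_of_nonneg_left k1 hc]
    · have hcα : -c * α < 1 := by
        have h5 : -c * α < (u - a) * α := by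
          apply mul_lt_mul_of_pos_right _ hα
          simp only [hcdef]; linarith
        rwa [mul_inv_cancel₀ hp.ne'] at h5
      nlinarith [mul_le_mul_of_nonpos_left k2 hc]
  -- commutation
  have hcomm : ∀ x : ℝ, π (x + 1) = π x + 1 := by
    intro x
    have e : x + 1 - a = (x - a) + ((1 : ℤ) : ℝ) := by push_cast; ring
    simp only [hπdef, e, Int.fract_add_intCast]
    ring
  -- continuity
  have tcont : Continuous t := by
    apply continuous_const.max
    exact (continuous_const.mul continuous_id).min (continuous_const.mul (continuous_const.sub continuous_id))
  have ctf : Continuous (t ∘ Int.fract) :=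
    ContinuousOn.comp_fract'' tcont.continuousOn (t0.trans t1.symm)
  have hcont : Continuous π := by
    apply continuous_id.add
    exact continuous_const.mul (ctf.comp (continuous_id.sub continuous_const))
  -- bounds and surjectivity
  have hbound : ∀ x : ℝ, x + -(|c| * α) ≤ π x ∧ π x ≤ x + |c| * α := by
    intro x
    have h0 := t_nonneg (Int.fract (x - a))
    have h1 := t_le (Int.fract (x - a)) (Int.fract_lt_one _).le
    have h2 : |c * t (Int.fract (x - a))| ≤ |c| * α := by
      rw [abs_mul]
      apply mul_le_mul_of_nonneg_left _ (abs_nonneg c)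
      rw [abs_of_nonneg h0]; exact h1
    have h3 := abs_le.mp h2
    constructor <;> simp only [hπdef] <;> linarith [h3.1, h3.2]
  have htop : Filter.Tendsto π Filter.atTop Filter.atTop := by
    apply Filter.tendsto_atTop_mono (fun x => (hbound x).1)
    exact Filter.tendsto_atTop_add_const_right _ _ Filter.tendsto_id
  have hbot : Filter.Tendsto π Filter.atBot Filter.atBot := by
    apply Filter.tendsto_atBot_mono (fun x => (hbound x).2)
    exact Filter.tendsto_atBot_add_const_right _ _ Filter.tendsto_id
  have hsurj : Function.Surjective π := hcont.surjective htop hbot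
  refine ⟨π, ⟨⟨hmono.injective, hsurj⟩, hmono, hcomm⟩, ?_, ?_⟩
  · -- π u = v
    have hfr : Int.fract (u - a) = u - a := Int.fract_eq_self.mpr ⟨by linarith, by linarith⟩
    simp only [hπdef, hfr, tu, mul_one, hcdef]
    ring
  · intro x hx
    set f : ℝ := Int.fract (x - a) with hf
    have hf0 : 0 ≤ f := Int.fract_nonneg _
    have hf1 : f < 1 := Int.fract_lt_one _
    have hxz : x + ((-⌊x - a⌋ : ℤ) : ℝ) = a + f := by
      simp only [hf, Int.fract]
      push_cast
      ring
    have hmem := hx (-⌊x - a⌋)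
    rw [hxz] at hmem
    have htf : t f = 0 := by
      rcases eq_or_lt_of_le hf0 with h | h
      · rw [← h, t0]
      · have hb : b ≤ a + f := by
          by_contra hcon
          exact hmem ⟨by linarith, by linarith⟩
        apply max_eq_left
        calc min (α * f) (β * (q - f)) ≤ β * (q - f) := min_le_right _ _
          _ ≤ 0 := mul_nonpos_of_nonneg_of_nonpos hβ.le (by simp only [hqdef]; linarith)
      
    simp only [hπdef, ← hf, htf, mul_zero, add_zero]


theorem orbit_singleton_or_open_interval
    (S : Set ℝ) (hfin : S.Finite) (hS : ∀ t ∈ S, 0 ≤ t)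
    (u : ℝ) (hu : 0 ≤ u) :
    (Int.fract u ∈ Int.fract '' S ↔
      {v | ∃ π, IsSTimedAutomorphism S π ∧ π u = v} = {u}) ∧
    (Int.fract u ∉ Int.fract '' S →
      (S = ∅ ∧ {v | ∃ π, IsSTimedAutomorphism S π ∧ π u = v} = Set.univ) ∨
      (∃ a b : ℝ, (∃ t ∈ S, ∃ z : ℤ, a = t + z) ∧ (∃ t ∈ S, ∃ z : ℤ, b = t + z) ∧
        a < b ∧ {v | ∃ π, IsSTimedAutomorphism S π ∧ π u = v} = Set.Ioo a b)) := by
  set Orb := {v | ∃ π, IsSTimedAutomorphism S π ∧ π u = v} with hOrbdef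
  have hid : IsSTimedAutomorphism S id :=
    ⟨⟨Function.bijective_id, strictMono_id, fun x => rfl⟩, fun t _ => rfl⟩
  have huOrb : u ∈ Orb := ⟨id, hid, rfl⟩
  have fix_int : ∀ π, IsSTimedAutomorphism S π → ∀ t ∈ S, ∀ z : ℤ, π (t + z) = t + z := by
    intro π hπ t ht z
    rw [timed_int hπ.1.2.2 t z, hπ.2 t ht]
  have main2 : Int.fract u ∉ Int.fract '' S →
      (S = ∅ ∧ Orb = Set.univ) ∨
      (∃ a b : ℝ, (∃ t ∈ S, ∃ z : ℤ, a = t + z) ∧ (∃ t ∈ S, ∃ z : ℤ, b = t + z) ∧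
        a < b ∧ Orb = Set.Ioo a b) := by
    intro hnot
    rcases Set.eq_empty_or_nonempty S with hSe | hSne
    · left
      refine ⟨hSe, ?_⟩
      apply Set.eq_univ_of_forall
      intro w
      refine ⟨fun x => x + (w - u), ⟨⟨⟨?_, ?_⟩, ?_, ?_⟩, ?_⟩, by simp⟩
      · intro x y h; dsimp at h; linarith
      · intro y; exact ⟨y - (w - u), by ring⟩
      · intro x y h; dsimp; linarith
      · intro x; dsimp; ring
      · intro t ht; rw [hSe] at ht; exact absurd ht (Set.notMem_empty t)
    · right
      obtain ⟨t₀, ht₀, hmin₀⟩ := Set.exists_min_image S (fun t => Int.fract (u - t)) hfin hSne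
      obtain ⟨t₁, ht₁, hmin₁⟩ := Set.exists_min_image S (fun t => Int.fract (t - u)) hfin hSne

      have hfpos : ∀ t ∈ S, 0 < Int.fract (u - t) ∧ 0 < Int.fract (t - u) := by
        intro t ht
        have hne : ¬ ∃ z : ℤ, u - t = (z : ℝ) := by
          rintro ⟨z, hz⟩
          exact hnot ⟨t, ht, (Int.fract_eq_fract.mpr ⟨z, hz⟩).symm⟩
        constructor
        · rcases (Int.fract_nonneg (u - t)).lt_or_eq with h | h
          · exact h
          · exfalso; apply hne
            refine ⟨⌊u - t⌋, ?_⟩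
            have h2 := h.symm
            rw [Int.fract] at h2
            linarith
        · rcases (Int.fract_nonneg (t - u)).lt_or_eq with h | h
          · exact h
          · exfalso; apply hne
            refine ⟨-⌊t - u⌋, ?_⟩
            have h2 := h.symm
            rw [Int.fract] at h2
            push_cast
            linarith
      set a : ℝ := u - Int.fract (u - t₀) with hadef
      set b : ℝ := u + Int.fract (t₁ - u) with hbdef
      have hau : a < u := by
        have := (hfpos t₀ ht₀).1
        simp only [hadef]; linarith
      have hub : u < b := by
        have := (hfpos t₁ ht₁).2
        simp only [hbdef]; linarith
      have below : ∀ t ∈ S, ∀ z : ℤ, t + (z : ℝ) < u → t + (z : ℝ) ≤ a := by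
        intro t ht z hlt
        have h1 : Int.fract (u - (t + (z : ℝ))) = Int.fract (u - t) := by
          rw [show u - (t + (z : ℝ)) = (u - t) + ((-z : ℤ) : ℝ) by push_cast; ring,
            Int.fract_add_intCast]
        have hpos : (0 : ℝ) < u - (t + (z : ℝ)) := by linarith
        have hfl : (0 : ℝ) ≤ (⌊u - (t + (z : ℝ))⌋ : ℝ) := by
          exact_mod_cast Int.floor_nonneg.mpr hpos.le
        have h2 : Int.fract (u - (t + (z : ℝ))) ≤ u - (t + (z : ℝ)) := by
          rw [Int.fract]; linarith
        have h3 := hmin₀ t ht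
        simp only [hadef]
        rw [h1] at h2
        linarith
      have above : ∀ t ∈ S, ∀ z : ℤ, u < t + (z : ℝ) → b ≤ t + (z : ℝ) := by
        intro t ht z hlt
        have h1 : Int.fract ((t + (z : ℝ)) - u) = Int.fract (t - u) := by
          rw [show (t + (z : ℝ)) - u = (t - u) + ((z : ℤ) : ℝ) by push_cast; ring,
            Int.fract_add_intCast]
        have hpos : (0 : ℝ) < (t + (z : ℝ)) - u := by linarith
        have hfl : (0 : ℝ) ≤ (⌊(t + (z : ℝ)) - u⌋ : ℝ) := by
          exact_mod_cast Int.floor_nonneg.mpr hpos.le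
        have h2 : Int.fract ((t + (z : ℝ)) - u) ≤ (t + (z : ℝ)) - u := by
          rw [Int.fract]; linarith
        have h3 := hmin₁ t ht
        simp only [hbdef]
        rw [h1] at h2
        linarith
      have hba : b ≤ a + 1 := by
        have h1 : a + 1 = t₀ + ((⌊u - t₀⌋ + 1 : ℤ) : ℝ) := by
          simp only [hadef, Int.fract]; push_cast; ring
        have hfr1 := Int.fract_lt_one (u - t₀)
        have h2 : u < t₀ + ((⌊u - t₀⌋ + 1 : ℤ) : ℝ) := by
          rw [← h1]; simp only [hadef]; linarith
        have h3 := above t₀ ht₀ _ h2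
        rw [← h1] at h3
        exact h3
      have haform : ∃ t ∈ S, ∃ z : ℤ, a = t + (z : ℝ) :=
        ⟨t₀, ht₀, ⌊u - t₀⌋, by simp only [hadef, Int.fract]; ring⟩
      have hbform : ∃ t ∈ S, ∃ z : ℤ, b = t + (z : ℝ) :=
        ⟨t₁, ht₁, -⌊t₁ - u⌋, by simp only [hbdef, Int.fract]; push_cast; ring⟩
      refine ⟨a, b, haform, hbform, by linarith, ?_⟩
      apply Set.Subset.antisymm
      · rintro w ⟨π, hπ, rfl⟩
        obtain ⟨ta, hta, za, hza⟩ := haform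
        obtain ⟨tb, htb, zb, hzb⟩ := hbform
        have hfa : π a = a := by rw [hza]; exact fix_int π hπ ta hta za
        have hfb : π b = b := by rw [hzb]; exact fix_int π hπ tb htb zb
        have m := hπ.1.2.1
        constructor
        · rw [← hfa]; exact m hau
        · rw [← hfb]; exact m hub
      · rintro w ⟨hw1, hw2⟩
        obtain ⟨π, hπ, hπu, hπfix⟩ := construct a u b w hau hub hba hw1 hw2
        refine ⟨π, ⟨hπ, ?_⟩, hπu⟩
        intro t ht
        apply hπfix
        intro z hz
        rcases lt_trichotomy (t + (z : ℝ)) u with h | h | h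
        · exact absurd hz.1 (not_lt.mpr (below t ht z h))
        · apply hnot
          refine ⟨t, ht, ?_⟩
          rw [← h]
          exact (Int.fract_add_intCast t z).symm
        · exact absurd hz.2 (not_lt.mpr (above t ht z h))
  constructor
  · constructor
    · rintro ⟨t, ht, hft⟩
      obtain ⟨z, hz⟩ := Int.fract_eq_fract.mp hft
      apply Set.Subset.antisymm
      · rintro w ⟨π, hπ, rfl⟩
        have hfix : π (t + ((-z : ℤ) : ℝ)) = t + ((-z : ℤ) : ℝ) := fix_int π hπ t ht (-z)
        have hu' : u = t + ((-z : ℤ) : ℝ) := by push_cast; linarith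
        rw [Set.mem_singleton_iff, hu', hfix]
      · exact Set.singleton_subset_iff.mpr huOrb
    · intro hOrb
      by_contra hnot
      rcases main2 hnot with ⟨hSe, hU⟩ | ⟨a, b, _, _, hab, hIoo⟩
      · have h1 : u + 1 ∈ Orb := by rw [hU]; trivial
        rw [hOrb, Set.mem_singleton_iff] at h1
        linarith
      · have hu' : u ∈ Set.Ioo a b := by rw [← hIoo]; exact huOrb
        have hub : u < b := hu'.2
        have hmid : (u + b) / 2 ∈ Set.Ioo a b := ⟨by linarith [hu'.1], by linarith⟩
        have h1 : (u + b) / 2 ∈ Orb := by rw [hIoo]; exact hmid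
        rw [hOrb, Set.mem_singleton_iff] at h1
        linarith
  · exact main2
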